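/- Let d ≥ 1 and let p : ℤ^d → [0,1] be a probability distribution (Σ_y p(y) = 1) with finite support and p(0) = 0. For each N ∈ ℕ let δ_N : P_F → ℝ satisfy Σ_{A∈P_F} |δ_N(A)| < ∞, and assume: (i) for every N and every ξ : ℤ^d → {0,1} with ξ(0) = 1, one has Σ_{A∈P_F} δ_N(A) ∏_{a∈A} ξ(a) ≥ −N Σ_{y∈ℤ^d} p(y)(1 − ξ(y)); and (ii) sup_N Σ_{A∈P_F} δ_N(A)⁻ < ∞, where x⁻ = max(−x, 0). Then there exists a constant k_δ > 0 such that for all N and all ξ : ℤ^d → {0,1} with ξ(0) = 1, Σ_{A∈P_F} δ_N(A) ∏_{a∈A} ξ(a) ≥ −k_δ Σ_{y∈ℤ^d} p(y)(1 − ξ(y)). -/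

import Mathlib

/-- Lemma 1.7: for a finite-range probability kernel `p` on `ℤ^d` with
`p 0 = 0`, if the perturbation rates `δ N` give nonnegative death rates
(hypothesis `hrate`) and have uniformly bounded negative parts, then condition (P4)
holds: there is a single constant `k > 0` working for all `N`. -/
theorem stmt_2 (d : ℕ) (hd : 1 ≤ d)
    (p : (Fin d → ℤ) → ℝ)
    (hp0 : ∀ y, 0 ≤ p y) (hp1 : ∀ y, p y ≤ 1)
    (hpsum : HasSum p 1)
    (hpfin : (Function.support p).Finite)
    (hpzero : p 0 = 0)
    (δ : ℕ → Finset (Fin d → ℤ) → ℝ)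
    (hδsum : ∀ N, Summable fun A => |δ N A|)
    (hrate : ∀ N : ℕ, ∀ ξ : (Fin d → ℤ) → ℝ, (∀ x, ξ x = 0 ∨ ξ x = 1) → ξ 0 = 1 →
      -((N : ℝ) * ∑' y, p y * (1 - ξ y)) ≤ ∑' A, δ N A * ∏ a ∈ A, ξ a)
    (hneg : ∃ C : ℝ, ∀ N, ∑' A, max (-(δ N A)) 0 ≤ C) :
    ∃ k : ℝ, 0 < k ∧ ∀ N : ℕ, ∀ ξ : (Fin d → ℤ) → ℝ, (∀ x, ξ x = 0 ∨ ξ x = 1) → ξ 0 = 1 →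
      -(k * ∑' y, p y * (1 - ξ y)) ≤ ∑' A, δ N A * ∏ a ∈ A, ξ a := by
  obtain ⟨C, hC⟩ := hneg
  set C' : ℝ := max C 0 with hC'
  have hC'0 : 0 ≤ C' := le_max_right _ _
  -- support of p nonempty
  have hSne : hpfin.toFinset.Nonempty := by
    rcases Finset.eq_empty_or_nonempty hpfin.toFinset with h | h
    · exfalso
      have : p = 0 := by
        funext y
        by_contra hy
        have : y ∈ hpfin.toFinset := by simpa [Set.Finite.mem_toFinset, Function.mem_support] using hy
        simp [h] at this
      rw [this] at hpsum
      have := hpsum.tsum_eq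
      simp at this
    · exact h
  set ε : ℝ := hpfin.toFinset.inf' hSne p with hε
  have hεpos : 0 < ε := by
    rw [hε]
    rw [Finset.lt_inf'_iff]
    intro y hy
    have : p y ≠ 0 := by simpa [Set.Finite.mem_toFinset] using hy
    exact lt_of_le_of_ne (hp0 y) (Ne.symm this)
  refine ⟨C' / ε + 1, by positivity, ?_⟩
  intro N ξ hξ hξ0
  -- basic facts
  have hprod : ∀ A : Finset (Fin d → ℤ), (∏ a ∈ A, ξ a) = 0 ∨ (∏ a ∈ A, ξ a) = 1 := by
    intro A
    induction A using Finset.induction with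
    | empty => right; simp
    | @insert a s hx ih =>
      rw [Finset.prod_insert hx]
      rcases hξ a with h | h <;> rcases ih with h2 | h2 <;> simp [h, h2]
  have hsumδξ : Summable fun A => δ N A * ∏ a ∈ A, ξ a := by
    apply Summable.of_norm_bounded (hδsum N)
    intro A
    rcases hprod A with h | h <;> simp [h, abs_nonneg]
  have hsumneg : Summable fun A => max (-(δ N A)) 0 := by
    apply Summable.of_nonneg_of_le (fun A => le_max_right _ _) (fun A => ?_) (hδsum N)
    exact max_le (neg_le_abs _) (abs_nonneg _)
  have hlow : -C' ≤ ∑' A, δ N A * ∏ a ∈ A, ξ a := by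
    have h1 : ∑' A, (-(max (-(δ N A)) 0)) ≤ ∑' A, δ N A * ∏ a ∈ A, ξ a := by
      apply Summable.tsum_le_tsum _ hsumneg.neg hsumδξ
      intro A
      rcases hprod A with h | h
      · simp [h, le_max_right]
      · simp only [h, mul_one]
        have := le_max_left (-(δ N A)) 0
        linarith
    rw [tsum_neg] at h1
    have h2 : ∑' A, max (-(δ N A)) 0 ≤ C' := le_trans (hC N) (le_max_left _ _)
    linarith
  have hTsum : Summable fun y => p y * (1 - ξ y) := by
    apply summable_of_finite_support
    apply Set.Finite.subset hpfin
    intro y hy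
    simp only [Function.mem_support] at hy ⊢
    intro h; apply hy; simp [h]
  have hT0 : 0 ≤ ∑' y, p y * (1 - ξ y) := by
    apply tsum_nonneg
    intro y
    apply mul_nonneg (hp0 y)
    rcases hξ y with h | h <;> simp [h]
  by_cases hcase : ∀ y ∈ hpfin.toFinset, ξ y = 1
  · have hT : (∑' y, p y * (1 - ξ y)) = 0 := by
      have : ∀ y, p y * (1 - ξ y) = 0 := by
        intro y
        by_cases hy : p y = 0
        · simp [hy]
        · have : y ∈ hpfin.toFinset := by simpa [Set.Finite.mem_toFinset] using hy
          simp [hcase y this]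
      simp [this]
    rw [hT, mul_zero, neg_zero]
    have := hrate N ξ hξ hξ0
    rw [hT, mul_zero, neg_zero] at this
    exact this
  · push_neg at hcase
    obtain ⟨y0, hy0S, hy0⟩ := hcase
    have hy0' : ξ y0 = 0 := (hξ y0).resolve_right hy0
    have hpy0 : ε ≤ p y0 := Finset.inf'_le _ hy0S
    have hterm : ε ≤ ∑' y, p y * (1 - ξ y) := by
      have h1 : p y0 * (1 - ξ y0) ≤ ∑' y, p y * (1 - ξ y) := by
        apply Summable.le_tsum hTsum
        intro y _
        apply mul_nonneg (hp0 y)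
        rcases hξ y with h | h <;> simp [h]
      rw [hy0'] at h1
      simpa using le_trans hpy0 (by linarith)
    have : C' ≤ (C' / ε + 1) * ∑' y, p y * (1 - ξ y) := by
      have h1 : C' / ε * ε ≤ C' / ε * ∑' y, p y * (1 - ξ y) := by
        apply mul_le_mul_of_nonneg_left hterm (by positivity)
      rw [div_mul_cancel₀ _ (ne_of_gt hεpos)] at h1
      nlinarith
    linarith
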